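/- Let T be an algebraic theory and Q a T-presheaf. The T-presheaf A(Q), defined by A(Q)_n = Q_{n+1} with action q •_{A(Q)} f = q •_Q (ι_{n,1}(f_1),…,ι_{n,1}(f_m), x_{n+1}) (where ι_{n,1}(f_i) = f_i • (x_{n+1,1},…,x_{n+1,n})), is an exponential object Q^T of Q by the theory presheaf T in the category Pshf T: there is a bijection Pshf T(P × T, Q) ≅ Pshf T(P, A(Q)), natural in P. -/

import Mathlib

/-- An algebraic theory: a family of sets `T n` with variables
`x_{n,i} : T n` and substitution `• : T m × (T n)^m → T n` satisfying the
three algebraic theory axioms. -/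
structure AlgTh where
  T : ℕ → Type
  xv : ∀ n, Fin n → T n
  subst : ∀ {m n}, T m → (Fin m → T n) → T n
  subst_xv : ∀ {m n} (j : Fin m) (g : Fin m → T n), subst (xv m j) g = g j
  subst_id : ∀ {m} (f : T m), subst f (xv m) = f
  subst_assoc : ∀ {l m n} (f : T l) (g : Fin l → T m) (h : Fin m → T n),
      subst (subst f g) h = subst f fun i => subst (g i) h

namespace AlgTh

variable (S : AlgTh)

/-- Weakening `ι_{n,1} : T n → T (n+1)`. -/
def wk {n : ℕ} (f : S.T n) : S.T (n + 1) :=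
  S.subst f fun j => S.xv (n + 1) j.castSucc

/-- Extension of a tuple: `(ι(h₁), …, ι(h_m), x_{n+1})`. -/
def ext {m n : ℕ} (h : Fin m → S.T n) : Fin (m + 1) → S.T (n + 1) :=
  Fin.snoc (fun i => S.wk (h i)) (S.xv (n + 1) (Fin.last n))

theorem ext_xv (m : ℕ) : S.ext (S.xv m) = S.xv (m + 1) := by
  funext j
  refine Fin.lastCases ?_ (fun i => ?_) j
  · simp [ext]
  · simp [ext, wk, S.subst_xv]

theorem subst_ext {l m n : ℕ} (f : Fin l → S.T m) (g : Fin m → S.T n) :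
    (fun i => S.subst (S.ext f i) (S.ext g)) = S.ext fun i => S.subst (f i) g := by
  funext i
  refine Fin.lastCases ?_ (fun i => ?_) i
  · simp [ext, S.subst_xv]
  · simp only [ext, Fin.snoc_castSucc, wk, S.subst_assoc, S.subst_xv]

end AlgTh

/-- A presheaf for an algebraic theory `S`: a family of sets `P n` with
actions `• : P m × (S n)^m → P n` satisfying the presheaf axioms. -/
structure Pshf (S : AlgTh) where
  P : ℕ → Type
  act : ∀ {m n}, P m → (Fin m → S.T n) → P n
  act_id : ∀ {m} (p : P m), act p (S.xv m) = p
  act_assoc : ∀ {l m n} (p : P l) (f : Fin l → S.T m) (g : Fin m → S.T n),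
      act (act p f) g = act p fun i => S.subst (f i) g

/-- A morphism of `S`-presheaves: a family of functions commuting with the
actions. -/
structure PshfHom {S : AlgTh} (P Q : Pshf S) where
  map : ∀ n, P.P n → Q.P n
  comm : ∀ {m n} (p : P.P m) (t : Fin m → S.T n), map n (P.act p t) = Q.act (map m p) t

namespace PshfHom

variable {S : AlgTh}

theorem ext' {P Q : Pshf S} {f g : PshfHom P Q} (h : f.map = g.map) : f = g := by
  obtain ⟨fm, fc⟩ := f; obtain ⟨gm, gc⟩ := g; cases h; rfl

/-- The identity morphism of presheaves. -/
def idHom (P : Pshf S) : PshfHom P P := ⟨fun _ p => p, fun _ _ => rfl⟩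

/-- Composition of presheaf morphisms. -/
def compHom {P Q R : Pshf S} (g : PshfHom Q R) (f : PshfHom P Q) : PshfHom P R where
  map n p := g.map n (f.map n p)
  comm p t := by (try dsimp only); rw [f.comm, g.comm]

end PshfHom

/-- The theory presheaf: `S` acting on itself by substitution. -/
def theoryPshf (S : AlgTh) : Pshf S where
  P := S.T
  act := S.subst
  act_id := S.subst_id
  act_assoc := S.subst_assoc

/-- The binary product of presheaves, computed pointwise. -/
def prodPshf {S : AlgTh} (P Q : Pshf S) : Pshf S where
  P n := P.P n × Q.P n
  act p t := (P.act p.1 t, Q.act p.2 t)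
  act_id p := by simp [P.act_id, Q.act_id]
  act_assoc p f g := by simp [P.act_assoc, Q.act_assoc]

/-- The `n`-fold power `Tⁿ` of the theory presheaf: `(Tⁿ)_m = (T m)ⁿ`,
with pointwise action. -/
def powPshf (S : AlgTh) (n : ℕ) : Pshf S where
  P m := Fin n → S.T m
  act t s := fun i => S.subst (t i) s
  act_id t := by funext i; exact S.subst_id (t i)
  act_assoc t f g := by funext i; exact S.subst_assoc (t i) f g

/-- The product-of-morphisms `h × k` between product presheaves. -/
def prodMapHom {S : AlgTh} {P P' Q Q' : Pshf S} (h : PshfHom P P') (k : PshfHom Q Q') :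
    PshfHom (prodPshf P Q) (prodPshf P' Q') where
  map n p := (h.map n p.1, k.map n p.2)
  comm p t := by simp [prodPshf, h.comm, k.comm]

/-- The presheaf `A(Q)`, with `A(Q)_n = Q_{n+1}` and action
`q •_{A(Q)} f = q •_Q (ι(f₁), …, ι(f_m), x_{n+1})`; it is the exponential
`Q^T` of `Q` by the theory presheaf. -/
def APshf {S : AlgTh} (Q : Pshf S) : Pshf S where
  P n := Q.P (n + 1)
  act q f := Q.act q (S.ext f)
  act_id q := by (try dsimp only); rw [S.ext_xv]; exact Q.act_id q
  act_assoc q f g := by (try dsimp only); rw [Q.act_assoc, S.subst_ext]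

section Exp

variable {S : AlgTh} {Q : Pshf S}

/-- Weakening variables `(x_{n+1,1}, …, x_{n+1,n})`. -/
def wkVars (S : AlgTh) (n : ℕ) : Fin n → S.T (n + 1) :=
  fun j => S.xv (n + 1) j.castSucc

/-- Currying: from `f : P × T → Q` to `P → A(Q)`. -/
def curryHom {P : Pshf S} (f : PshfHom (prodPshf P (theoryPshf S)) Q) :
    PshfHom P (APshf Q) where
  map n p := f.map (n + 1) (P.act p (wkVars S n), S.xv (n + 1) (Fin.last n))
  comm {m n} p t := by
    show f.map (n + 1) _ = Q.act (f.map (m + 1) _) (S.ext t)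
    erw [← f.comm]
    congr 1
    show (P.act (P.act p t) _, _) = (P.act (P.act p _) (S.ext t), S.subst _ (S.ext t))
    rw [P.act_assoc, P.act_assoc]
    refine Prod.ext ?_ ?_
    · show P.act p _ = P.act p _
      congr 1
      funext i
      simp only [wkVars, S.subst_xv, AlgTh.ext, Fin.snoc_castSucc, AlgTh.wk]
      rfl
    · simp only [AlgTh.ext, S.subst_xv, Fin.snoc_last]

/-- Uncurrying: from `g : P → A(Q)` to `P × T → Q`. -/
def uncurryHom {P : Pshf S} (g : PshfHom P (APshf Q)) :
    PshfHom (prodPshf P (theoryPshf S)) Q where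
  map n pt := Q.act (g.map n pt.1) (Fin.snoc (S.xv n) pt.2)
  comm {m n} pt s := by
    show Q.act (g.map n (P.act pt.1 s)) _ = Q.act (Q.act (g.map m pt.1) _) s
    rw [g.comm]
    show Q.act (Q.act _ (S.ext s)) _ = _
    erw [Q.act_assoc, Q.act_assoc]
    congr 1
    funext i
    refine Fin.lastCases ?_ (fun j => ?_) i
    · simp only [AlgTh.ext, Fin.snoc_last, S.subst_xv]
      rw [Fin.snoc_last (α := fun _ => S.T n) (x := ((prodPshf P (theoryPshf S)).act pt s).2), Fin.snoc_last (α := fun _ => S.T m) (x := pt.2)]; rfl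
    · simp only [AlgTh.ext, Fin.snoc_castSucc, AlgTh.wk, S.subst_assoc, S.subst_xv,
        S.subst_id, Fin.snoc_castSucc (α := fun _ => S.T n) (x := ((prodPshf P (theoryPshf S)).act pt s).2),
        Fin.snoc_castSucc (α := fun _ => S.T m) (x := pt.2)]

theorem uncurry_curry {P : Pshf S} (f : PshfHom (prodPshf P (theoryPshf S)) Q) :
    uncurryHom (curryHom f) = f := by
  refine PshfHom.ext' ?_
  funext n pt
  show Q.act (f.map (n + 1) _) _ = f.map n pt
  erw [← f.comm]
  congr 1
  show (P.act (P.act pt.1 _) _, S.subst _ _) = pt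
  rw [P.act_assoc]
  refine Prod.ext ?_ ?_
  · show P.act pt.1 _ = pt.1
    have : (fun i => S.subst (wkVars S n i) (Fin.snoc (S.xv n) pt.2)) = S.xv n := by
      funext i
      simp [wkVars, S.subst_xv, Fin.snoc_castSucc (α := fun _ => S.T n) (x := pt.2)]
    rw [this, P.act_id]
  · simp [S.subst_xv, Fin.snoc_last (α := fun _ => S.T n) (x := pt.2)]
    rfl

theorem curry_uncurry {P : Pshf S} (g : PshfHom P (APshf Q)) :
    curryHom (uncurryHom g) = g := by
  refine PshfHom.ext' ?_
  funext n p
  show Q.act (g.map (n + 1) (P.act p (wkVars S n))) _ = g.map n p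
  rw [g.comm]
  show Q.act (Q.act _ (S.ext (wkVars S n))) _ = _
  erw [Q.act_assoc]
  have : (fun i => S.subst (S.ext (wkVars S n) i)
      (Fin.snoc (S.xv (n + 1)) (S.xv (n + 1) (Fin.last n)))) = S.xv (n + 1) := by
    funext i
    refine Fin.lastCases ?_ (fun j => ?_) i
    · simp [AlgTh.ext, S.subst_xv]
    · simp [AlgTh.ext, AlgTh.wk, wkVars, S.subst_assoc, S.subst_xv]
  erw [this, Q.act_id]

end Exp

/-- Let `T` be an algebraic theory and `Q` a `T`-presheaf.
The `T`-presheaf `A(Q)`, defined by `A(Q)ₙ = Q_{n+1}` with action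
`q •_{A(Q)} f = q •_Q (ι_{n,1}(f₁), …, ι_{n,1}(f_m), x_{n+1})`, is an
exponential object `Q^T` of `Q` by the theory presheaf `T` in the category
`Pshf T`: there is a bijection `Pshf T(P × T, Q) ≅ Pshf T(P, A(Q))`, natural
in `P`. -/
theorem APshf_is_exponential (S : AlgTh) (Q : Pshf S) :
    ∃ e : ∀ P : Pshf S, PshfHom (prodPshf P (theoryPshf S)) Q ≃ PshfHom P (APshf Q),
      -- naturality in `P`: for every presheaf morphism `h : P' → P` and
      -- `f : P × T → Q`, we have `e(f ∘ (h × id_T)) = e(f) ∘ h`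
      ∀ (P P' : Pshf S) (h : PshfHom P' P)
        (f : PshfHom (prodPshf P (theoryPshf S)) Q),
        e P' (f.compHom (prodMapHom h (PshfHom.idHom (theoryPshf S)))) =
          (e P f).compHom h := by
  refine ⟨fun P => ⟨curryHom, uncurryHom, uncurry_curry, curry_uncurry⟩, ?_⟩
  intro P P' h f
  refine PshfHom.ext' ?_
  funext n p
  show f.map (n + 1) _ = f.map (n + 1) _
  congr 1
  show (h.map (n + 1) (P'.act p (wkVars S n)), _) = (P.act (h.map n p) (wkVars S n), _)
  rw [h.comm]
  rfl
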